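/- Sufficient condition for sample-efficiency gain: under the setting of the sample-efficiency ratio formula, if F_ξ ≥ F_μ and b_ξ² + (ε̄ − b_μ²)·(b'_ξ+1)²/(b'_μ+1)² ≤ ε̄ + Δ, where ε̄ = ε − V_μ, then n/m ≥ 1. -/
import Mathlib


/-- Sufficient condition for a sample-efficiency gain: in the setting of the
sample-efficiency ratio formula, if `F_ξ ≥ F_μ` and
`b_ξ² + (ε̄ − b_μ²)·(b'_ξ+1)²/(b'_μ+1)² ≤ ε̄ + Δ` with `ε̄ = ε − V_μ`,
then `n/m ≥ 1`. -/
theorem sample_efficiency_gain_sufficient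
    (Fμ Fξ Vμ Vξ bμ bξ bμ' bξ' ε Δ n m : ℝ)
    (hFμ : 0 < Fμ) (hFξ : 0 < Fξ) (hFle : Fμ ≤ Fξ)
    (hΔ : Δ = Vμ - Vξ) (hΔ0 : 0 ≤ Δ)
    (hbμ' : bμ' + 1 ≠ 0) (hbξ' : bξ' + 1 ≠ 0)
    (hεμ : 0 < (ε - Vμ) - bμ ^ 2) (hεξ : 0 < ε - Vξ - bξ ^ 2)
    (hn : n = (bμ' + 1) ^ 2 / (Fμ * (ε - Vμ - bμ ^ 2)))
    (hm : m = (bξ' + 1) ^ 2 / (Fξ * (ε - Vξ - bξ ^ 2)))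
    (hcond : bξ ^ 2 + ((ε - Vμ) - bμ ^ 2) * ((bξ' + 1) ^ 2 / (bμ' + 1) ^ 2)
        ≤ (ε - Vμ) + Δ) :
    1 ≤ n / m := by
  have hA : 0 < (bμ' + 1) ^ 2 := by positivity
  have hB : 0 < (bξ' + 1) ^ 2 := by positivity
  have hkey : ((ε - Vμ) - bμ ^ 2) * (bξ' + 1) ^ 2
      ≤ (ε - Vξ - bξ ^ 2) * (bμ' + 1) ^ 2 := by
    have h := hcond
    rw [div_eq_mul_inv] at h
    have hAi : 0 < ((bμ' + 1) ^ 2)⁻¹ := by positivity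
    nlinarith [mul_le_mul_of_nonneg_right h hA.le,
      mul_inv_cancel₀ hA.ne']
  have hm0 : 0 < m := by rw [hm]; positivity
  rw [le_div_iff₀ hm0, one_mul, hn, hm, div_le_div_iff₀ (by positivity) (by positivity)]
  nlinarith [mul_le_mul_of_nonneg_right hFle (mul_pos hεμ hB).le,
    mul_le_mul_of_nonneg_left hkey hFξ.le]
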